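/- For every ε > 0 there exists η with 0 < η ≤ 1 such that the following holds for every integer s ≥ 2 and every finite additive group Z. Let ν : Z → ℝ be nonnegative with ‖ν − 1‖_{cut^s(Z)} ≤ η. Then: (i) for every g : Z → ℝ with 0 ≤ g ≤ ν pointwise there exists w : Z → [0,1] such that ‖g − w‖_{cut^s(Z)} ≤ ε; and (ii) for every f : Z → ℝ with |f| ≤ ν pointwise there exists h : Z → [−1,1] such that ‖f − h‖_{cut^s(Z)} ≤ ε. -/

import Mathlib

open Finset

/-- The average of a real-valued function on a finite type. -/
noncomputable def avg (α : Type*) [Fintype α] (f : α → ℝ) : ℝ :=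
  (∑ x, f x) / (Fintype.card α : ℝ)

/-- The `ℓ`-box norm `‖F‖_{□_ℓ(V^s)}` of `F : V^s → ℝ`.  Here `V^{s×ℓ}` is modelled as
`Fin s → Fin ℓ → V`, an element `ω ∈ [ℓ]^s` as `ω : Fin s → Fin ℓ`, and the projection
`π_ω : V^{s×ℓ} → V^s` sends `x` to `fun i => x i (ω i)`.  The box norm `‖F‖_{□(V^s)}`
is the case `ℓ = 2`. -/
noncomputable def boxNorm (V : Type*) [Fintype V] (s ℓ : ℕ) (F : (Fin s → V) → ℝ) : ℝ :=
  (avg (Fin s → Fin ℓ → V) fun x =>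
      ∏ ω : Fin s → Fin ℓ, F fun i => x i (ω i)) ^ (((ℓ : ℝ) ^ s)⁻¹)

/-- The cut norm `‖F‖_{cut(V^s)}` of `F : V^s → ℝ`; the distinguished element `1^s` of
`[2]^s` is modelled as `fun _ => (0 : Fin 2)`. -/
noncomputable def cutNorm (V : Type*) [Fintype V] (s : ℕ) (F : (Fin s → V) → ℝ) : ℝ :=
  sSup {r : ℝ | ∃ H : (Fin s → Fin 2) → (Fin s → V) → ℝ,
    (∀ ω y, H ω y ∈ Set.Icc (-1 : ℝ) 1) ∧
    r = avg (Fin s → Fin 2 → V) fun x =>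
      F (fun i => x i 0) *
        ∏ ω ∈ Finset.univ.filter (fun ω : Fin s → Fin 2 => ω ≠ fun _ => 0),
          H ω fun i => x i (ω i)}
/-- `F_f : Z^s → ℝ`, `F_f(x₁,…,x_s) = f(x₁ + ⋯ + x_s)`. -/
noncomputable def addLift (Z : Type*) [AddCommGroup Z] (s : ℕ) (f : Z → ℝ) :
    (Fin s → Z) → ℝ :=
  fun x => f (∑ i, x i)

/-- The `s`-additive cut norm `‖f‖_{cut^s(Z)} = ‖F_f‖_{cut(Z^s)}`. -/
noncomputable def addCutNorm (Z : Type*) [AddCommGroup Z] [Fintype Z] (s : ℕ) (f : Z → ℝ) : ℝ :=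
  cutNorm Z s (addLift Z s f)
namespace DM

section avgLemmas

variable {α β : Type*} [Fintype α] [Fintype β]

lemma avg_def (f : α → ℝ) : avg α f = (∑ x, f x) / (Fintype.card α : ℝ) := rfl

lemma avg_const [Nonempty α] (c : ℝ) : avg α (fun _ => c) = c := by
  unfold avg
  rw [Finset.sum_const, Finset.card_univ, nsmul_eq_mul]
  field_simp

lemma abs_avg_le [Nonempty α] {f : α → ℝ} {c : ℝ} (h : ∀ a, |f a| ≤ c) : |avg α f| ≤ c := by
  unfold avg
  have hcard : (0:ℝ) < (Fintype.card α : ℝ) := by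
    exact_mod_cast Fintype.card_pos
  rw [abs_div, abs_of_pos hcard, div_le_iff₀ hcard]
  calc |∑ x, f x| ≤ ∑ x, |f x| := Finset.abs_sum_le_sum_abs _ _
    _ ≤ ∑ _x : α, c := Finset.sum_le_sum fun i _ => h i
    _ = c * (Fintype.card α : ℝ) := by
        rw [Finset.sum_const, Finset.card_univ, nsmul_eq_mul]; ring

lemma avg_mono {f g : α → ℝ} (h : ∀ a, f a ≤ g a) : avg α f ≤ avg α g := by
  unfold avg
  rcases eq_or_lt_of_le (Nat.cast_nonneg (α := ℝ) (Fintype.card α)) with h0 | h0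
  · rw [← h0]; simp
  · rw [div_le_div_iff_of_pos_right h0]
    · exact Finset.sum_le_sum fun i _ => h i

lemma avg_add (f g : α → ℝ) : avg α (fun a => f a + g a) = avg α f + avg α g := by
  unfold avg; rw [Finset.sum_add_distrib]; ring

lemma avg_mul_const (f : α → ℝ) (c : ℝ) : avg α (fun a => f a * c) = avg α f * c := by
  unfold avg; rw [← Finset.sum_mul]; ring

lemma avg_const_mul (f : α → ℝ) (c : ℝ) : avg α (fun a => c * f a) = c * avg α f := by
  unfold avg; rw [← Finset.mul_sum]; ring

lemma avg_finsum {ι : Type*} (t : Finset ι) (F : ι → α → ℝ) :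
    avg α (fun a => ∑ i ∈ t, F i a) = ∑ i ∈ t, avg α (F i) := by
  unfold avg
  rw [Finset.sum_comm, Finset.sum_div]

lemma avg_congr {f g : α → ℝ} (h : ∀ a, f a = g a) : avg α f = avg α g := by
  unfold avg
  rw [Finset.sum_congr rfl fun a _ => h a]

lemma avg_equiv (e : β ≃ α) (f : α → ℝ) : avg α f = avg β (fun b => f (e b)) := by
  unfold avg
  rw [← Equiv.sum_comp e f, Fintype.card_congr e]

lemma avg_prod_mul (f : α → ℝ) (g : β → ℝ) :
    avg (α × β) (fun q => f q.1 * g q.2) = avg α f * avg β g := by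
  unfold avg
  rw [Fintype.sum_prod_type, Fintype.card_prod]
  rw [← Finset.sum_mul_sum]
  push_cast
  field_simp

lemma avg_prod (F : α × β → ℝ) :
    avg (α × β) F = avg α (fun a => avg β (fun b => F (a, b))) := by
  unfold avg
  rw [Fintype.sum_prod_type, Fintype.card_prod, ← Finset.sum_div, div_div]
  push_cast
  rw [mul_comm]

lemma avg_swap (F : α → β → ℝ) :
    avg α (fun a => avg β (fun b => F a b)) = avg β (fun b => avg α (fun a => F a b)) := by
  rw [← avg_prod (fun q => F q.1 q.2), ← avg_prod (fun q => F q.2 q.1)]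
  exact avg_equiv (Equiv.prodComm β α) (fun q : α × β => F q.1 q.2)

end avgLemmas

end DM
namespace DM

variable {Z : Type} [AddCommGroup Z] [Fintype Z] {s : ℕ}

/-- boundedness of a family of cut functions -/
def Bdd (H : (Fin s → Fin 2) → (Fin s → Z) → ℝ) : Prop :=
  ∀ ω y, H ω y ∈ Set.Icc (-1 : ℝ) 1

/-- the structured product function -/
def prodPhi (H : (Fin s → Fin 2) → (Fin s → Z) → ℝ) : (Fin s → Fin 2 → Z) → ℝ :=
  fun x => ∏ ω ∈ Finset.univ.filter (fun ω : Fin s → Fin 2 => ω ≠ fun _ => 0),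
      H ω fun i => x i (ω i)

noncomputable def J (f : Z → ℝ) (φ : (Fin s → Fin 2 → Z) → ℝ) : ℝ :=
  avg (Fin s → Fin 2 → Z) fun x => f (∑ i, x i 0) * φ x

def cutSet (s : ℕ) (f : Z → ℝ) : Set ℝ :=
  {r | ∃ H : (Fin s → Fin 2) → (Fin s → Z) → ℝ, Bdd H ∧ r = J f (prodPhi H)}

lemma addCutNorm_eq (f : Z → ℝ) : addCutNorm Z s f = sSup (cutSet s f) := by
  rw [addCutNorm, cutNorm]
  congr 1

lemma J_neg (f : Z → ℝ) (φ : (Fin s → Fin 2 → Z) → ℝ) : J f (fun x => -φ x) = -J f φ := by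
  unfold J avg
  rw [← neg_div, ← Finset.sum_neg_distrib]
  congr 1
  apply Finset.sum_congr rfl
  intros; ring

lemma J_add (f : Z → ℝ) (φ ψ : (Fin s → Fin 2 → Z) → ℝ) :
    J f (fun x => φ x + ψ x) = J f φ + J f ψ := by
  unfold J
  rw [← avg_add]
  congr 1; funext x; ring

omit [AddCommGroup Z] [Fintype Z] in
lemma abs_prodPhi_le {H : (Fin s → Fin 2) → (Fin s → Z) → ℝ} (hH : Bdd H) (x) :
    |prodPhi H x| ≤ 1 := by
  unfold prodPhi
  rw [Finset.abs_prod]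
  apply Finset.prod_le_one (fun ω _ => abs_nonneg _)
  intro ω _
  exact abs_le.2 ⟨(hH ω _).1, (hH ω _).2⟩

lemma abs_J_le {f : Z → ℝ} {φ : (Fin s → Fin 2 → Z) → ℝ} {c : ℝ}
    (hφ : ∀ x, |φ x| ≤ 1) (hc : ∀ z, |f z| ≤ c) : |J f φ| ≤ c := by
  have h0c : 0 ≤ c := (abs_nonneg _).trans (hc 0)
  apply abs_avg_le
  intro x
  rw [abs_mul]
  calc |f (∑ i, x i 0)| * |φ x| ≤ c * 1 :=
        mul_le_mul (hc _) (hφ x) (abs_nonneg _) h0c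
    _ = c := mul_one c

lemma bddAbove_cutSet (f : Z → ℝ) : BddAbove (cutSet s f) := by
  obtain ⟨c, hc⟩ : ∃ c, ∀ z, |f z| ≤ c :=
    ⟨∑ z, |f z|, fun z => Finset.single_le_sum (fun z _ => abs_nonneg (f z)) (mem_univ z)⟩
  refine ⟨c, fun r hr => ?_⟩
  obtain ⟨H, hH, rfl⟩ := hr
  exact (le_abs_self _).trans (abs_J_le (abs_prodPhi_le hH) hc)

omit [AddCommGroup Z] [Fintype Z] in
lemma bddOne : Bdd (fun (_ : Fin s → Fin 2) (_ : Fin s → Z) => (1:ℝ)) := by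
  intro ω y; constructor <;> norm_num

omit [AddCommGroup Z] [Fintype Z] in
lemma prodPhi_one : prodPhi (fun (_ : Fin s → Fin 2) (_ : Fin s → Z) => (1:ℝ))
    = fun (_ : Fin s → Fin 2 → Z) => (1:ℝ) := by
  funext x; unfold prodPhi; simp

lemma J_mem_cutSet {f : Z → ℝ} {H : (Fin s → Fin 2) → (Fin s → Z) → ℝ} (hH : Bdd H) :
    J f (prodPhi H) ∈ cutSet s f := ⟨H, hH, rfl⟩

lemma J_le_addCutNorm {f : Z → ℝ} {H : (Fin s → Fin 2) → (Fin s → Z) → ℝ} (hH : Bdd H) :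
    J f (prodPhi H) ≤ addCutNorm Z s f := by
  rw [addCutNorm_eq]
  exact le_csSup (bddAbove_cutSet f) (J_mem_cutSet hH)

lemma addCutNorm_le {f : Z → ℝ} {c : ℝ} (hc : 0 ≤ c)
    (h : ∀ H : (Fin s → Fin 2) → (Fin s → Z) → ℝ, Bdd H → J f (prodPhi H) ≤ c) :
    addCutNorm Z s f ≤ c := by
  rw [addCutNorm_eq]
  apply Real.sSup_le _ hc
  rintro r ⟨H, hH, rfl⟩
  exact h H hH

lemma exists_gt_of_lt_addCutNorm {f : Z → ℝ} {c : ℝ} (hc : 0 ≤ c)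
    (h : c < addCutNorm Z s f) :
    ∃ H : (Fin s → Fin 2) → (Fin s → Z) → ℝ, Bdd H ∧ c < J f (prodPhi H) := by
  by_contra hcon
  push_neg at hcon
  exact absurd (addCutNorm_le hc fun H hH => hcon H hH) (not_le.2 h)

section NeZeroS

variable [NeZero s]

/-- a distinguished nonzero element of `[2]^s` -/
def omega1 (s : ℕ) [NeZero s] : Fin s → Fin 2 := fun i => if i = 0 then 1 else 0

omit [AddCommGroup Z] [Fintype Z] in
lemma omega1_ne : omega1 s ≠ fun _ => (0 : Fin 2) := by
  intro h
  have := congrFun h 0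
  simp [omega1] at this

lemma omega1_mem : omega1 s ∈ Finset.univ.filter (fun ω : Fin s → Fin 2 => ω ≠ fun _ => 0) := by
  simp [omega1_ne]

omit [AddCommGroup Z] [Fintype Z] in
/-- negation of a structured function is structured -/
lemma prodPhi_neg {H : (Fin s → Fin 2) → (Fin s → Z) → ℝ} (hH : Bdd H) :
    ∃ H' : (Fin s → Fin 2) → (Fin s → Z) → ℝ,
      Bdd H' ∧ prodPhi H' = fun x => -prodPhi H x := by
  classical
  refine ⟨fun ω => if ω = omega1 s then (fun v => -(H ω v)) else H ω, ?_, ?_⟩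
  · intro ω y
    beta_reduce
    rcases eq_or_ne ω (omega1 s) with h | h
    · subst h
      rw [if_pos rfl]
      have h1 := (hH (omega1 s) y).1
      have h2 := (hH (omega1 s) y).2
      exact Set.mem_Icc.2 ⟨by linarith, by linarith⟩
    · rw [if_neg h]; exact hH ω y
  · funext x
    unfold prodPhi
    have hmem := omega1_mem (s := s)
    have hP : ∏ ω ∈ (Finset.univ.filter
          (fun ω : Fin s → Fin 2 => ω ≠ fun _ => 0)).erase (omega1 s),
        (if ω = omega1 s then (fun v => -(H ω v)) else H ω) (fun i => x i (ω i))
        = ∏ ω ∈ (Finset.univ.filter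
          (fun ω : Fin s → Fin 2 => ω ≠ fun _ => 0)).erase (omega1 s),
        H ω (fun i => x i (ω i)) :=
      Finset.prod_congr rfl fun ω hω => by rw [if_neg (Finset.ne_of_mem_erase hω)]
    rw [← Finset.mul_prod_erase _ _ hmem, ← Finset.mul_prod_erase _ _ hmem, hP]
    beta_reduce
    rw [if_pos rfl]
    ring

lemma neg_J_le_addCutNorm {f : Z → ℝ} {H : (Fin s → Fin 2) → (Fin s → Z) → ℝ} (hH : Bdd H) :
    -J f (prodPhi H) ≤ addCutNorm Z s f := by
  obtain ⟨H', hH', hprod⟩ := prodPhi_neg (Z := Z) hH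
  have : J f (prodPhi H') = -J f (prodPhi H) := by rw [hprod, J_neg]
  rw [← this]
  exact J_le_addCutNorm hH'

lemma abs_J_le_addCutNorm {f : Z → ℝ} {H : (Fin s → Fin 2) → (Fin s → Z) → ℝ} (hH : Bdd H) :
    |J f (prodPhi H)| ≤ addCutNorm Z s f :=
  abs_le.2 ⟨by linarith [neg_J_le_addCutNorm (f := f) hH], J_le_addCutNorm hH⟩

lemma addCutNorm_nonneg (f : Z → ℝ) : 0 ≤ addCutNorm Z s f := by
  have hb : Bdd (fun (_ : Fin s → Fin 2) (_ : Fin s → Z) => (0:ℝ)) := by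
    intro ω y; constructor <;> norm_num
  have h0 : prodPhi (fun (_ : Fin s → Fin 2) (_ : Fin s → Z) => (0:ℝ))
      = fun (_ : Fin s → Fin 2 → Z) => (0:ℝ) := by
    funext x
    exact Finset.prod_eq_zero (omega1_mem) rfl
  have : J f (prodPhi (fun (_ : Fin s → Fin 2) (_ : Fin s → Z) => (0:ℝ))) = 0 := by
    rw [h0]
    unfold J avg
    simp
  rw [← this]
  exact J_le_addCutNorm hb

/-- subadditivity -/
lemma addCutNorm_add_le (f g : Z → ℝ) :
    addCutNorm Z s (fun z => f z + g z) ≤ addCutNorm Z s f + addCutNorm Z s g := by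
  apply addCutNorm_le (add_nonneg (addCutNorm_nonneg f) (addCutNorm_nonneg g))
  intro H hH
  have : J (fun z => f z + g z) (prodPhi H) = J f (prodPhi H) + J g (prodPhi H) := by
    unfold J
    rw [← avg_add]
    congr 1; funext x; ring
  rw [this]
  exact add_le_add (J_le_addCutNorm hH) (J_le_addCutNorm hH)

lemma addCutNorm_neg (f : Z → ℝ) :
    addCutNorm Z s (fun z => -f z) ≤ addCutNorm Z s f := by
  apply addCutNorm_le (addCutNorm_nonneg f)
  intro H hH
  have : J (fun z => -f z) (prodPhi H) = -J f (prodPhi H) := by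
    unfold J avg
    rw [← neg_div, ← Finset.sum_neg_distrib]
    congr 1
    apply Finset.sum_congr rfl
    intros; ring
  rw [this]
  exact neg_J_le_addCutNorm hH

end NeZeroS

end DM
namespace DM

variable {Z : Type} [AddCommGroup Z] [Fintype Z] {s : ℕ} [NeZero s]

/-- replace the `(0,0)` entry -/
def set00 (v : Z) (y : Fin s → Fin 2 → Z) : Fin s → Fin 2 → Z :=
  Function.update y 0 (Function.update (y 0) 0 v)

omit [Fintype Z] in
@[simp] lemma set00_00 (v : Z) (y : Fin s → Fin 2 → Z) : set00 v y 0 0 = v := by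
  simp [set00]

omit [Fintype Z] in
lemma set00_ne0 (v : Z) (y : Fin s → Fin 2 → Z) {i : Fin s} (h : i ≠ 0) (j : Fin 2) :
    set00 v y i j = y i j := by
  simp [set00, Function.update_of_ne h]

omit [Fintype Z] in
lemma set00_at1 (v : Z) (y : Fin s → Fin 2 → Z) (i : Fin s) : set00 v y i 1 = y i 1 := by
  rcases eq_or_ne i 0 with h | h
  · subst h
    simp [set00, Function.update_of_ne (show (1 : Fin 2) ≠ 0 by decide)]
  · exact set00_ne0 v y h 1

omit [Fintype Z] in
lemma set00_set00 (v w : Z) (y : Fin s → Fin 2 → Z) : set00 v (set00 w y) = set00 v y := by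
  funext i j
  rcases eq_or_ne i 0 with h | h
  · subst h
    fin_cases j
    · simp
    · exact ((set00_at1 _ _ _).trans (set00_at1 _ _ _)).trans (set00_at1 _ _ _).symm
  · rw [set00_ne0 _ _ h, set00_ne0 _ _ h, set00_ne0 _ _ h]

omit [Fintype Z] in
lemma set00_self (y : Fin s → Fin 2 → Z) : set00 (y 0 0) y = y := by
  funext i j
  rcases eq_or_ne i 0 with h | h
  · subst h
    fin_cases j
    · simp
    · exact set00_at1 _ _ _
  · rw [set00_ne0 _ _ h]

/-- sum of column-0 entries except the first -/
def rest (y : Fin s → Fin 2 → Z) : Z := ∑ i ∈ Finset.univ.erase 0, y i 0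

def Ssum (y : Fin s → Fin 2 → Z) : Z := ∑ i, y i 0

omit [Fintype Z] in
lemma rest_set00 (v : Z) (y : Fin s → Fin 2 → Z) : rest (set00 v y) = rest y :=
  Finset.sum_congr rfl fun i hi => set00_ne0 v y (Finset.mem_erase.1 hi).1 0

omit [Fintype Z] in
lemma Ssum_eq (y : Fin s → Fin 2 → Z) : Ssum y = y 0 0 + rest y :=
  (Finset.add_sum_erase _ _ (Finset.mem_univ 0)).symm

omit [Fintype Z] in
lemma Ssum_set00 (v : Z) (y : Fin s → Fin 2 → Z) : Ssum (set00 v y) = v + rest y := by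
  rw [Ssum_eq, set00_00, rest_set00]

/-- the section with prescribed sum -/
def patch (z : Z) (y : Fin s → Fin 2 → Z) : Fin s → Fin 2 → Z := set00 (z - rest y) y

omit [Fintype Z] in
lemma Ssum_patch (z : Z) (y : Fin s → Fin 2 → Z) : Ssum (patch z y) = z := by
  rw [patch, Ssum_set00, sub_add_cancel]

/-- the master reparametrisation -/
def masterEquiv : (Z × (Fin s → Fin 2 → Z)) ≃ (Z × (Fin s → Fin 2 → Z)) where
  toFun p := (p.2 0 0, patch p.1 p.2)
  invFun q := (Ssum q.2, set00 q.1 q.2)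
  left_inv p := by
    obtain ⟨z, y⟩ := p
    simp only [Prod.mk.injEq]
    constructor
    · exact Ssum_patch z y
    · rw [patch, set00_set00, set00_self]
  right_inv q := by
    obtain ⟨a, x⟩ := q
    simp only [Prod.mk.injEq]
    constructor
    · exact set00_00 a x
    · rw [patch, rest_set00, set00_set00, Ssum_eq, add_sub_cancel_right, set00_self]

/-- conditional-expectation ("dual") function on `Z` -/
noncomputable def Df (φ : (Fin s → Fin 2 → Z) → ℝ) (z : Z) : ℝ :=
  avg (Fin s → Fin 2 → Z) fun y => φ (patch z y)

lemma abs_Df_le {φ : (Fin s → Fin 2 → Z) → ℝ} (hφ : ∀ x, |φ x| ≤ 1) (z : Z) :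
    |Df φ z| ≤ 1 :=
  abs_avg_le fun y => hφ _

/-- the fundamental identity:  `J f φ = 𝔼_z f(z) · (Dφ)(z)` -/
lemma J_eq_avg (f : Z → ℝ) (φ : (Fin s → Fin 2 → Z) → ℝ) :
    J f φ = avg Z (fun z => f z * Df φ z) := by
  classical
  have key : ∑ p : Z × (Fin s → Fin 2 → Z), f p.1 * φ (patch p.1 p.2)
      = (Fintype.card Z : ℝ) * ∑ x : Fin s → Fin 2 → Z, f (Ssum x) * φ x := by
    have step1 : ∀ p : Z × (Fin s → Fin 2 → Z),
        f p.1 * φ (patch p.1 p.2)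
          = f (Ssum (masterEquiv p).2) * φ ((masterEquiv p).2) := by
      rintro ⟨z, y⟩
      simp only [masterEquiv, Equiv.coe_fn_mk, Ssum_patch]
    calc ∑ p : Z × (Fin s → Fin 2 → Z), f p.1 * φ (patch p.1 p.2)
        = ∑ p : Z × (Fin s → Fin 2 → Z), f (Ssum (masterEquiv p).2) * φ ((masterEquiv p).2) :=
          Finset.sum_congr rfl fun p _ => step1 p
      _ = ∑ q : Z × (Fin s → Fin 2 → Z), f (Ssum q.2) * φ q.2 :=
          Equiv.sum_comp masterEquiv (fun q => f (Ssum q.2) * φ q.2)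
      _ = (Fintype.card Z : ℝ) * ∑ x : Fin s → Fin 2 → Z, f (Ssum x) * φ x := by
          simp only [Fintype.sum_prod_type, Finset.sum_const, Finset.card_univ, nsmul_eq_mul]
  have hcZ : (0:ℝ) < (Fintype.card Z : ℝ) := by exact_mod_cast Fintype.card_pos
  have hcX : (0:ℝ) < (Fintype.card (Fin s → Fin 2 → Z) : ℝ) := by exact_mod_cast Fintype.card_pos
  unfold J Df avg
  rw [eq_div_iff (ne_of_gt hcZ)]
  have expand : ∑ z : Z, f z * ((∑ y : Fin s → Fin 2 → Z, φ (patch z y)) /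
      (Fintype.card (Fin s → Fin 2 → Z) : ℝ))
      = (∑ p : Z × (Fin s → Fin 2 → Z), f p.1 * φ (patch p.1 p.2)) /
        (Fintype.card (Fin s → Fin 2 → Z) : ℝ) := by
    rw [Fintype.sum_prod_type, Finset.sum_div]
    apply Finset.sum_congr rfl
    intro z _
    rw [← mul_div_assoc, Finset.mul_sum]
  rw [expand, key]
  field_simp
  simp [Ssum]

end DM
namespace DM

set_option linter.unusedSectionVars false

variable {Z : Type} [AddCommGroup Z] [Fintype Z] {s : ℕ} [NeZero s]

lemma Df_one : Df (fun (_ : Fin s → Fin 2 → Z) => (1:ℝ)) = fun _ => 1 := by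
  funext z
  exact avg_const 1

lemma avg_comp_Ssum (f : Z → ℝ) :
    avg (Fin s → Fin 2 → Z) (fun x => f (Ssum x)) = avg Z f := by
  have h := J_eq_avg (s := s) f (fun _ => (1:ℝ))
  unfold J at h
  rw [Df_one] at h
  simpa [Ssum] using h

/-- the translation vector associated to a parameter `p` -/
def tvec (p : Fin s → Fin 2 → Z) : Fin s → Z :=
  fun i => if i = 0 then -(rest p) else p i 0

/-- translated family of cut functions -/
def shiftH (H : (Fin s → Fin 2) → (Fin s → Z) → ℝ) (p : Fin s → Fin 2 → Z) :
    (Fin s → Fin 2) → (Fin s → Z) → ℝ :=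
  fun ω v => H ω (fun i => if ω i = 0 then v i + tvec p i else p i 1)

lemma Bdd_shiftH {H : (Fin s → Fin 2) → (Fin s → Z) → ℝ} (hH : Bdd H) (p) :
    Bdd (shiftH H p) := fun ω v => hH ω _

def mulH (K K' : (Fin s → Fin 2) → (Fin s → Z) → ℝ) : (Fin s → Fin 2) → (Fin s → Z) → ℝ :=
  fun ω v => K ω v * K' ω v

lemma Bdd_mulH {K K' : (Fin s → Fin 2) → (Fin s → Z) → ℝ} (hK : Bdd K) (hK' : Bdd K') :
    Bdd (mulH K K') := by
  intro ω v
  have h1 := abs_le.2 ⟨(hK ω v).1, (hK ω v).2⟩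
  have h2 := abs_le.2 ⟨(hK' ω v).1, (hK' ω v).2⟩
  have : |mulH K K' ω v| ≤ 1 := by
    rw [show mulH K K' ω v = K ω v * K' ω v from rfl, abs_mul]
    calc |K ω v| * |K' ω v| ≤ 1 * 1 := mul_le_mul h1 h2 (abs_nonneg _) zero_le_one
      _ = 1 := one_mul 1
  exact Set.mem_Icc.2 (abs_le.1 this)

lemma prodPhi_mulH (K K' : (Fin s → Fin 2) → (Fin s → Z) → ℝ) :
    prodPhi (mulH K K') = fun x => prodPhi K x * prodPhi K' x := by
  funext x
  unfold prodPhi mulH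
  rw [← Finset.prod_mul_distrib]

/-- shifted evaluation -/
def sigmaMap (p x : Fin s → Fin 2 → Z) : Fin s → Fin 2 → Z :=
  fun i j => if j = 0 then x i 0 + tvec p i else p i 1

lemma prodPhi_sigmaMap (H : (Fin s → Fin 2) → (Fin s → Z) → ℝ) (p x) :
    prodPhi H (sigmaMap p x) = prodPhi (shiftH H p) x := by
  unfold prodPhi shiftH
  apply Finset.prod_congr rfl
  intro ω _
  congr 1
  funext i
  show (if ω i = 0 then x i 0 + tvec p i else p i 1)
      = if ω i = 0 then x i (ω i) + tvec p i else p i 1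
  by_cases h : ω i = 0
  · rw [if_pos h, if_pos h, h]
  · rw [if_neg h, if_neg h]

/-- the `y`-dependent reparametrisation of the second copy -/
def shiftEq (y : Fin s → Fin 2 → Z) : (Fin s → Fin 2 → Z) ≃ (Fin s → Fin 2 → Z) where
  toFun p := fun i j => if j = 0 ∧ i ≠ 0 then y i 0 + p i j else p i j
  invFun q := fun i j => if j = 0 ∧ i ≠ 0 then q i j - y i 0 else q i j
  left_inv p := by
    funext i j
    by_cases h : j = 0 ∧ i ≠ 0
    · simp only [h, and_true, if_pos, if_true]
      simp [h.1, h.2]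
    · simp [h]
  right_inv q := by
    funext i j
    by_cases h : j = 0 ∧ i ≠ 0
    · simp [h, h.1, h.2]
    · simp [h]

lemma patch_shiftEq (z : Z) (y p : Fin s → Fin 2 → Z) :
    patch z (shiftEq y p) = sigmaMap p (patch z y) := by
  have hrest : rest (shiftEq y p) = rest y + rest p := by
    unfold rest
    rw [← Finset.sum_add_distrib]
    apply Finset.sum_congr rfl
    intro i hi
    have hi0 : i ≠ 0 := (Finset.mem_erase.1 hi).1
    show (if (0 : Fin 2) = 0 ∧ i ≠ 0 then y i 0 + p i 0 else p i 0) = y i 0 + p i 0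
    rw [if_pos ⟨rfl, hi0⟩]
  funext i j
  fin_cases j
  · -- j = 0
    rcases eq_or_ne i 0 with hi | hi
    · subst hi
      show patch z (shiftEq y p) 0 0 = sigmaMap p (patch z y) 0 0
      rw [patch, set00_00]
      show z - rest (shiftEq y p) = if (0:Fin 2) = 0 then patch z y 0 0 + tvec p 0 else p 0 1
      rw [if_pos rfl, patch, set00_00, hrest, tvec, if_pos rfl]
      abel
    · show patch z (shiftEq y p) i 0 = sigmaMap p (patch z y) i 0
      rw [patch, set00_ne0 _ _ hi]
      show (if (0:Fin 2) = 0 ∧ i ≠ 0 then y i 0 + p i 0 else p i 0)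
          = if (0:Fin 2) = 0 then patch z y i 0 + tvec p i else p i 1
      rw [if_pos ⟨rfl, hi⟩, if_pos rfl, patch, set00_ne0 _ _ hi, tvec, if_neg hi]
  · -- j = 1
    show patch z (shiftEq y p) i 1 = sigmaMap p (patch z y) i 1
    rw [patch, set00_at1]
    show (if (1:Fin 2) = 0 ∧ i ≠ 0 then y i 0 + p i 1 else p i 1)
        = if (1:Fin 2) = 0 then patch z y i 0 + tvec p i else p i 1
    rw [if_neg (by simp), if_neg (by decide)]

/-- key multiplication identity for dual functions -/
lemma Df_mul {H₁ H₂ : (Fin s → Fin 2) → (Fin s → Z) → ℝ} (z : Z) :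
    Df (prodPhi H₁) z * Df (prodPhi H₂) z
      = avg (Fin s → Fin 2 → Z)
          (fun p => Df (prodPhi (mulH H₁ (shiftH H₂ p))) z) := by
  unfold Df
  rw [← avg_prod_mul, avg_prod]
  have inner : ∀ y, avg (Fin s → Fin 2 → Z)
      (fun y' => prodPhi H₁ (patch z y) * prodPhi H₂ (patch z y'))
      = avg (Fin s → Fin 2 → Z)
        (fun p => prodPhi (mulH H₁ (shiftH H₂ p)) (patch z y)) := by
    intro y
    rw [avg_equiv (shiftEq y)]
    congr 1
    funext p
    rw [patch_shiftEq, prodPhi_sigmaMap, prodPhi_mulH]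
  calc avg (Fin s → Fin 2 → Z) (fun y => avg (Fin s → Fin 2 → Z)
        (fun y' => prodPhi H₁ (patch z y) * prodPhi H₂ (patch z y')))
      = avg (Fin s → Fin 2 → Z) (fun y => avg (Fin s → Fin 2 → Z)
        (fun p => prodPhi (mulH H₁ (shiftH H₂ p)) (patch z y))) := by
        congr 1; funext y; exact inner y
    _ = avg (Fin s → Fin 2 → Z) (fun p => avg (Fin s → Fin 2 → Z)
        (fun y => prodPhi (mulH H₁ (shiftH H₂ p)) (patch z y))) :=
        avg_swap _

/-- functions which are averages of dual functions -/
def IsAvgD (s : ℕ) [NeZero s] (ψ : Z → ℝ) : Prop :=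
  ∃ (ι : Type) (_ : Fintype ι) (_ : Nonempty ι)
    (K : ι → (Fin s → Fin 2) → (Fin s → Z) → ℝ),
      (∀ p, Bdd (K p)) ∧ ψ = fun z => avg ι (fun p => Df (prodPhi (K p)) z)

lemma isAvgD_D {H : (Fin s → Fin 2) → (Fin s → Z) → ℝ} (hH : Bdd H) :
    IsAvgD s (Df (prodPhi H)) := by
  refine ⟨PUnit, inferInstance, inferInstance, fun _ => H, fun _ => hH, ?_⟩
  funext z
  exact (avg_const _).symm

lemma isAvgD_one : IsAvgD s (fun (_ : Z) => (1:ℝ)) := by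
  refine ⟨PUnit, inferInstance, inferInstance, fun _ => fun _ _ => 1, fun _ => bddOne, ?_⟩
  funext z
  refine Eq.symm (Eq.trans (avg_congr fun p => ?_) (avg_const 1))
  show Df (prodPhi (fun (_ : Fin s → Fin 2) (_ : Fin s → Z) => (1:ℝ))) z = 1
  rw [prodPhi_one, Df_one]

lemma isAvgD_mul {ψ₁ ψ₂ : Z → ℝ} (h₁ : IsAvgD s ψ₁) (h₂ : IsAvgD s ψ₂) :
    IsAvgD s (fun z => ψ₁ z * ψ₂ z) := by
  obtain ⟨ι₁, i₁, n₁, K₁, hK₁, rfl⟩ := h₁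
  obtain ⟨ι₂, i₂, n₂, K₂, hK₂, rfl⟩ := h₂
  refine ⟨(ι₁ × ι₂) × (Fin s → Fin 2 → Z), inferInstance, inferInstance,
    fun r => mulH (K₁ r.1.1) (shiftH (K₂ r.1.2) r.2),
    fun r => Bdd_mulH (hK₁ r.1.1) (Bdd_shiftH (hK₂ r.1.2) r.2), ?_⟩
  funext z
  rw [← avg_prod_mul]
  have step1 : avg (ι₁ × ι₂) (fun q => Df (prodPhi (K₁ q.1)) z * Df (prodPhi (K₂ q.2)) z)
      = avg (ι₁ × ι₂) (fun q => avg (Fin s → Fin 2 → Z)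
          (fun p => Df (prodPhi (mulH (K₁ q.1) (shiftH (K₂ q.2) p))) z)) :=
    avg_congr fun q => Df_mul z
  have step2 := avg_prod (fun r : (ι₁ × ι₂) × (Fin s → Fin 2 → Z) =>
    Df (prodPhi (mulH (K₁ r.1.1) (shiftH (K₂ r.1.2) r.2))) z)
  exact step1.trans step2.symm

lemma isAvgD_prod : ∀ (k : ℕ) (G : Fin k → Z → ℝ), (∀ j, IsAvgD s (G j)) →
    IsAvgD s (fun z => ∏ j, G j z)
  | 0, G, hG => by
      simpa using isAvgD_one
  | (n+1), G, hG => by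
      have h := isAvgD_prod n (fun j => G j.succ) (fun j => hG j.succ)
      have hrw : (fun z => ∏ j, G j z) = fun z => G 0 z * ∏ j : Fin n, G j.succ z := by
        funext z
        rw [Fin.prod_univ_succ]
      rw [hrw]
      exact isAvgD_mul (hG 0) h

/-- the fundamental estimate: correlations with averaged dual functions
are bounded by the cut norm -/
lemma abs_avg_mul_le_addCutNorm {ψ : Z → ℝ} (hψ : IsAvgD s ψ) (f : Z → ℝ) :
    |avg Z (fun z => f z * ψ z)| ≤ addCutNorm Z s f := by
  obtain ⟨ι, iι, nι, K, hK, rfl⟩ := hψ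
  have swap : avg Z (fun z => f z * avg ι (fun p => Df (prodPhi (K p)) z))
      = avg ι (fun p => J f (prodPhi (K p))) := by
    refine Eq.trans (avg_congr (fun z => (avg_const_mul (fun p => Df (prodPhi (K p)) z) (f z)).symm)) ?_
    refine Eq.trans (avg_swap _) ?_
    exact avg_congr fun p => (J_eq_avg f (prodPhi (K p))).symm
  rw [swap]
  exact abs_avg_le fun p => abs_J_le_addCutNorm (hK p)

end DM
namespace DM

set_option linter.unusedSectionVars false

variable {Z : Type} [AddCommGroup Z] [Fintype Z] {s : ℕ} [NeZero s]

lemma pow_expand {ι : Type} [Fintype ι] (k : ℕ) (F : ι → ℝ) :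
    (∑ i, F i) ^ k = ∑ g : Fin k → ι, ∏ j, F (g j) := by
  classical
  have h1 : (∑ i, F i) ^ k = ∏ _j : Fin k, (∑ i, F i) := by
    rw [Finset.prod_const, Finset.card_univ, Fintype.card_fin]
  rw [h1, Finset.prod_univ_sum (fun _ => Finset.univ) (fun _ i => F i),
    Fintype.piFinset_univ]

lemma key_power {ι : Type} [Fintype ι] [Nonempty ι] (lam : ι → ℝ)
    (hlam : ∀ i, 0 ≤ lam i) (hsum : ∑ i, lam i = 1)
    (K : ι → (Fin s → Fin 2) → (Fin s → Z) → ℝ) (hK : ∀ i, Bdd (K i))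
    (f : Z → ℝ) (k : ℕ) :
    |avg Z (fun z => f z * (∑ i, lam i * Df (prodPhi (K i)) z) ^ k)|
      ≤ addCutNorm Z s f := by
  classical
  set Ψ : ι → Z → ℝ := fun i z => Df (prodPhi (K i)) z with hΨ
  have habs : ∀ g : Fin k → ι,
      |avg Z (fun z => f z * ∏ j, Ψ (g j) z)| ≤ addCutNorm Z s f := fun g =>
    abs_avg_mul_le_addCutNorm
      (isAvgD_prod k (fun j => Ψ (g j)) (fun j => isAvgD_D (hK (g j)))) f
  have main : avg Z (fun z => f z * (∑ i, lam i * Ψ i z) ^ k)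
      = ∑ g : Fin k → ι, (∏ j, lam (g j)) * avg Z (fun z => f z * ∏ j, Ψ (g j) z) := by
    have hz : ∀ z, f z * (∑ i, lam i * Ψ i z) ^ k
        = ∑ g : Fin k → ι, (∏ j, lam (g j)) * (f z * ∏ j, Ψ (g j) z) := by
      intro z
      rw [pow_expand k (fun i => lam i * Ψ i z), Finset.mul_sum]
      apply Finset.sum_congr rfl
      intro g _
      rw [Finset.prod_mul_distrib]
      ring
    rw [avg_congr hz, avg_finsum]
    apply Finset.sum_congr rfl
    intro g _
    exact avg_const_mul _ _
  rw [main]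
  calc |∑ g : Fin k → ι, (∏ j, lam (g j)) * avg Z (fun z => f z * ∏ j, Ψ (g j) z)|
      ≤ ∑ g : Fin k → ι, |(∏ j, lam (g j)) * avg Z (fun z => f z * ∏ j, Ψ (g j) z)| :=
        Finset.abs_sum_le_sum_abs _ _
    _ ≤ ∑ g : Fin k → ι, (∏ j, lam (g j)) * addCutNorm Z s f := by
        apply Finset.sum_le_sum
        intro g _
        rw [abs_mul, abs_of_nonneg (Finset.prod_nonneg fun j _ => hlam (g j))]
        exact mul_le_mul_of_nonneg_left (habs g)
          (Finset.prod_nonneg fun j _ => hlam (g j))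
    _ = (∑ g : Fin k → ι, ∏ j, lam (g j)) * addCutNorm Z s f := by
        rw [Finset.sum_mul]
    _ = addCutNorm Z s f := by
        rw [← pow_expand k lam, hsum, one_pow, one_mul]

end DM
namespace DM

set_option linter.unusedSectionVars false
set_option maxHeartbeats 1000000

variable {Z : Type} [AddCommGroup Z] [Fintype Z] {s : ℕ} [NeZero s]

lemma exists_dual_certificate (g : Z → ℝ) (ε : ℝ) (hε : 0 < ε)
    (hcon : ∀ w : Z → ℝ, (∀ x, w x ∈ Set.Icc (0:ℝ) 1) →
      ε < addCutNorm Z s (fun z => g z - w z)) :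
    ∃ (ι : Type) (_ : Fintype ι) (_ : Nonempty ι)
      (lam : ι → ℝ) (K : ι → (Fin s → Fin 2) → (Fin s → Z) → ℝ),
      (∀ i, 0 ≤ lam i) ∧ (∑ i, lam i = 1) ∧ (∀ i, Bdd (K i)) ∧
      ∀ w : Z → ℝ, (∀ x, w x ∈ Set.Icc (0:ℝ) 1) →
        ε < ∑ i, lam i * avg Z (fun z => (g z - w z) * Df (prodPhi (K i)) z) := by
  classical
  set Kset : Set (Z → ℝ) := {w | ∀ x, w x ∈ Set.Icc (0:ℝ) 1} with hKset
  have hKcompact : IsCompact Kset := by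
    have : Kset = Set.pi Set.univ (fun _ : Z => Set.Icc (0:ℝ) 1) := by
      ext w
      exact ⟨fun h i _ => h i, fun h x => h x (Set.mem_univ x)⟩
    rw [this]
    exact isCompact_univ_pi fun _ => isCompact_Icc
  have hK0 : (fun _ : Z => (0:ℝ)) ∈ Kset := fun x => by
    constructor <;> norm_num
  -- the open cover
  let ι₀ := {H : (Fin s → Fin 2) → (Fin s → Z) → ℝ // Bdd H}
  let U : ι₀ → Set (Z → ℝ) := fun H =>
    {w | ε < avg Z (fun z => (g z - w z) * Df (prodPhi H.1) z)}
  have hUopen : ∀ H, IsOpen (U H) := by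
    intro H
    apply isOpen_lt continuous_const
    have : (fun w : Z → ℝ => avg Z (fun z => (g z - w z) * Df (prodPhi H.1) z))
        = fun w : Z → ℝ => (∑ z, (g z - w z) * Df (prodPhi H.1) z) / (Fintype.card Z : ℝ) := by
      funext w; rfl
    rw [this]
    apply Continuous.div_const
    apply continuous_finset_sum
    intro z _
    exact ((continuous_const.sub (continuous_apply z)).mul continuous_const)
  have hcover : Kset ⊆ ⋃ H : ι₀, U H := by
    intro w hw
    obtain ⟨H, hH, hJ⟩ := exists_gt_of_lt_addCutNorm (le_of_lt hε) (hcon w hw)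
    rw [J_eq_avg] at hJ
    exact Set.mem_iUnion.2 ⟨⟨H, hH⟩, hJ⟩
  obtain ⟨t, ht⟩ := hKcompact.elim_finite_subcover U hUopen hcover
  have htne : t.Nonempty := by
    obtain ⟨i, hi, _⟩ := Set.mem_iUnion₂.1 (ht hK0)
    exact ⟨i, hi⟩
  haveI : Nonempty ↥t := ⟨⟨htne.choose, htne.choose_spec⟩⟩
  -- the affine map into ℝ^t and the two convex sets
  let A : (Z → ℝ) → (↥t → ℝ) := fun w i =>
    avg Z (fun z => (g z - w z) * Df (prodPhi i.1.1) z)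
  have hAcont : Continuous A := by
    apply continuous_pi
    intro i
    have : (fun w : Z → ℝ => avg Z (fun z => (g z - w z) * Df (prodPhi i.1.1) z))
        = fun w : Z → ℝ => (∑ z, (g z - w z) * Df (prodPhi i.1.1) z) / (Fintype.card Z : ℝ) := by
      funext w; rfl
    rw [this]
    apply Continuous.div_const
    apply continuous_finset_sum
    intro z _
    exact ((continuous_const.sub (continuous_apply z)).mul continuous_const)
  have hAaffine : ∀ (a b : ℝ) (w₁ w₂ : Z → ℝ), a + b = 1 →
      A (a • w₁ + b • w₂) = fun i => a * A w₁ i + b * A w₂ i := by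
    intro a b w₁ w₂ hab
    funext i
    have hz : ∀ z, (g z - (a • w₁ + b • w₂) z) * Df (prodPhi i.1.1) z
        = a * ((g z - w₁ z) * Df (prodPhi i.1.1) z)
          + b * ((g z - w₂ z) * Df (prodPhi i.1.1) z) := by
      intro z
      have : (a • w₁ + b • w₂) z = a * w₁ z + b * w₂ z := rfl
      rw [this]
      linear_combination (g z * Df (prodPhi i.1.1) z) * hab.symm
    show avg Z _ = _
    rw [avg_congr hz, avg_add, avg_const_mul, avg_const_mul]
  let T : Set (↥t → ℝ) := A '' Kset
  have hTcompact : IsCompact T := hKcompact.image hAcont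
  have hTconvex : Convex ℝ T := by
    rintro τ₁ ⟨w₁, hw₁, rfl⟩ τ₂ ⟨w₂, hw₂, rfl⟩ a b ha hb hab
    refine ⟨a • w₁ + b • w₂, ?_, ?_⟩
    · intro x
      have h₁ := hw₁ x
      have h₂ := hw₂ x
      simp only [Set.mem_Icc] at h₁ h₂ ⊢
      have : (a • w₁ + b • w₂) x = a * w₁ x + b * w₂ x := rfl
      rw [this]
      constructor
      · have := mul_nonneg ha h₁.1
        have := mul_nonneg hb h₂.1
        linarith
      · have := mul_le_mul_of_nonneg_left h₁.2 ha
        have := mul_le_mul_of_nonneg_left h₂.2 hb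
        nlinarith
    · rw [hAaffine a b w₁ w₂ hab]
      funext i
      simp [smul_eq_mul]
  let Q : Set (↥t → ℝ) := {τ | ∀ i, τ i ≤ ε}
  have hQclosed : IsClosed Q := by
    have : Q = ⋂ i, {τ : ↥t → ℝ | τ i ≤ ε} := by
      ext τ; simp [Q, Set.mem_iInter]
    rw [this]
    exact isClosed_iInter fun i => isClosed_le (continuous_apply i) continuous_const
  have hQconvex : Convex ℝ Q := by
    intro τ₁ h₁ τ₂ h₂ a b ha hb hab
    intro i
    have : (a • τ₁ + b • τ₂) i = a * τ₁ i + b * τ₂ i := rfl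
    rw [this]
    nlinarith [h₁ i, h₂ i]
  have hdisj : Disjoint Q T := by
    rw [Set.disjoint_right]
    rintro τ ⟨w, hw, rfl⟩ hQ
    obtain ⟨i, hi, hUi⟩ := Set.mem_iUnion₂.1 (ht hw)
    exact absurd (hQ ⟨i, hi⟩) (not_le.2 hUi)
  obtain ⟨ℓ, u, v, hQu, huv, hTv⟩ :=
    geometric_hahn_banach_closed_compact hQconvex hQclosed hTconvex hTcompact hdisj
  -- decompose ℓ along coordinates
  set a : ↥t → ℝ := fun i => ℓ ((Pi.single i (1:ℝ) : ↥t → ℝ)) with ha_def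
  have hrep : ∀ τ : ↥t → ℝ, ℓ τ = ∑ i, τ i * a i := by
    intro τ
    have hτ : τ = ∑ i, τ i • (Pi.single i (1:ℝ) : ↥t → ℝ) := by
      symm
      have h1 : ∀ i, τ i • (Pi.single i (1:ℝ) : ↥t → ℝ) = Pi.single i (τ i) := fun i => by
        rw [← Pi.single_smul, smul_eq_mul, mul_one]
      rw [Finset.sum_congr rfl (fun i _ => h1 i), Finset.univ_sum_single]
    conv_lhs => rw [hτ]
    rw [map_sum]
    apply Finset.sum_congr rfl
    intro i _
    rw [map_smul, smul_eq_mul]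
  have hconst : (fun _ : ↥t => ε) ∈ Q := fun i => le_refl ε
  have hεu : ℓ (fun _ => ε) < u := hQu _ hconst
  -- nonnegativity of the coefficients
  have hanonneg : ∀ i, 0 ≤ a i := by
    intro i
    by_contra hneg
    push_neg at hneg
    set c := ℓ (fun _ => ε) with hc
    set N : ℝ := (u - c) / (-(a i)) + 1 with hN
    have hNpos : 0 < N := by
      apply add_pos_of_nonneg_of_pos
      · apply div_nonneg (by linarith) (by linarith)
      · norm_num
    have hqN : ((fun _ => ε) - N • (Pi.single i (1:ℝ) : ↥t → ℝ)) ∈ Q := by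
      intro j
      rcases eq_or_ne j i with h | h
      · subst h
        simp only [Pi.sub_apply, Pi.smul_apply, Pi.single_eq_same, smul_eq_mul, mul_one]
        linarith
      · simp only [Pi.sub_apply, Pi.smul_apply, Pi.single_eq_of_ne h, smul_eq_mul, mul_zero,
          sub_zero]
        exact le_refl ε
    have hval : ℓ ((fun _ => ε) - N • (Pi.single i (1:ℝ) : ↥t → ℝ)) = c - N * a i := by
      rw [map_sub, map_smul, smul_eq_mul, hc]
    have hlt := hQu _ hqN
    rw [hval] at hlt
    have : N * (-(a i)) > u - c := by
      rw [hN]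
      have h1 : 0 < -(a i) := by linarith
      have h2 : (u - c) / (-(a i)) * (-(a i)) = u - c := div_mul_cancel₀ _ (ne_of_gt h1)
      nlinarith
    linarith
  have hTne : A (fun _ => 0) ∈ T := ⟨_, hK0, rfl⟩
  have hsumpos : 0 < ∑ i, a i := by
    rcases eq_or_lt_of_le (Finset.sum_nonneg fun i _ => hanonneg i) with h0 | h0
    · exfalso
      have hall : ∀ i ∈ Finset.univ, a i = 0 :=
        (Finset.sum_eq_zero_iff_of_nonneg fun i _ => hanonneg i).1 h0.symm
      have hzero : ∀ τ : ↥t → ℝ, ℓ τ = 0 := by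
        intro τ
        rw [hrep]
        apply Finset.sum_eq_zero
        intro i _
        rw [hall i (Finset.mem_univ i), mul_zero]
      have h1 : (0:ℝ) < u := by rw [← hzero (fun _ => ε)]; exact hεu
      have h2 : v < 0 := by rw [← hzero (A (fun _ => 0))]; exact hTv _ hTne
      linarith
    · exact h0
  -- normalise
  set S := ∑ i, a i with hS
  refine ⟨↥t, inferInstance, inferInstance, fun i => a i / S, fun i => i.1.1,
    fun i => div_nonneg (hanonneg i) (le_of_lt hsumpos), ?_, fun i => i.1.2, ?_⟩
  · rw [← Finset.sum_div, ← hS, div_self (ne_of_gt hsumpos)]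
  · intro w hw
    have hTw : A w ∈ T := ⟨w, hw, rfl⟩
    have h1 : v < ℓ (A w) := hTv _ hTw
    have h2 : ℓ (fun _ => ε) = ε * S := by
      rw [hrep, hS, Finset.mul_sum]
    have h3 : ε * S < ℓ (A w) := by
      rw [← h2]; linarith
    rw [hrep] at h3
    have h4 : ε < (∑ i, A w i * a i) / S := by
      rw [lt_div_iff₀ hsumpos]
      exact h3
    calc ε < (∑ i, A w i * a i) / S := h4
      _ = ∑ i, a i / S * A w i := by
          rw [Finset.sum_div]
          apply Finset.sum_congr rfl
          intro i _
          ring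
      _ = ∑ i, a i / S * avg Z (fun z => (g z - w z) * Df (prodPhi i.1.1) z) := rfl

end DM
namespace DM

set_option linter.unusedSectionVars false
set_option maxHeartbeats 1000000

variable {Z : Type} [AddCommGroup Z] [Fintype Z] {s : ℕ} [NeZero s]

lemma avg_le_addCutNorm (f : Z → ℝ) : avg Z f ≤ addCutNorm Z s f := by
  have h1 : J f (prodPhi (fun (_ : Fin s → Fin 2) (_ : Fin s → Z) => (1:ℝ))) = avg Z f := by
    rw [prodPhi_one]
    unfold J
    refine Eq.trans (avg_congr fun x => mul_one _) ?_
    exact avg_comp_Ssum (s := s) f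
  rw [← h1]
  exact J_le_addCutNorm bddOne

lemma core (ε C : ℝ) (hε : 0 < ε) (P : Polynomial ℝ)
    (hP : ∀ x ∈ Set.Icc (-1:ℝ) 1, |P.eval x - max x 0| < ε/6)
    (hC : C = ∑ k ∈ Finset.range (P.natDegree + 1), |P.coeff k|)
    (η : ℝ) (hη : 0 < η) (hη1 : η ≤ 1) (hηC : C * η ≤ ε/6)
    (ν : Z → ℝ) (hν : ∀ x, 0 ≤ ν x) (hνcut : addCutNorm Z s (fun z => ν z - 1) ≤ η)
    (g : Z → ℝ) (hg : ∀ x, 0 ≤ g x ∧ g x ≤ ν x) :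
    ∃ w : Z → ℝ, (∀ x, w x ∈ Set.Icc (0:ℝ) 1) ∧
      addCutNorm Z s (fun z => g z - w z) ≤ ε := by
  classical
  by_contra hcon
  push_neg at hcon
  have hcon' : ∀ w : Z → ℝ, (∀ x, w x ∈ Set.Icc (0:ℝ) 1) →
      ε < addCutNorm Z s (fun z => g z - w z) := fun w hw => hcon w hw
  obtain ⟨ι, iι, nι, lam, K, hlam, hsum, hK, hstrict⟩ :=
    exists_dual_certificate g ε hε hcon'
  set ψ : Z → ℝ := fun z => ∑ i, lam i * Df (prodPhi (K i)) z with hψdef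
  have hψ_bound : ∀ z, |ψ z| ≤ 1 := by
    intro z
    calc |ψ z| ≤ ∑ i, |lam i * Df (prodPhi (K i)) z| := Finset.abs_sum_le_sum_abs _ _
      _ ≤ ∑ i, lam i := by
          apply Finset.sum_le_sum
          intro i _
          rw [abs_mul, abs_of_nonneg (hlam i)]
          calc lam i * |Df (prodPhi (K i)) z| ≤ lam i * 1 :=
                mul_le_mul_of_nonneg_left (abs_Df_le (abs_prodPhi_le (hK i)) z) (hlam i)
            _ = lam i := mul_one _
      _ = 1 := hsum
  set wstar : Z → ℝ := fun z => if 0 ≤ ψ z then 1 else 0 with hwdef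
  have hwmem : ∀ x, wstar x ∈ Set.Icc (0:ℝ) 1 := by
    intro x
    by_cases h : 0 ≤ ψ x <;> simp [hwdef, h]
  have hswap : ∀ w : Z → ℝ, ∑ i, lam i * avg Z (fun z => (g z - w z) * Df (prodPhi (K i)) z)
      = avg Z (fun z => (g z - w z) * ψ z) := by
    intro w
    have hz : ∀ z, (g z - w z) * ψ z
        = ∑ i, lam i * ((g z - w z) * Df (prodPhi (K i)) z) := by
      intro z
      rw [hψdef, Finset.mul_sum]
      apply Finset.sum_congr rfl
      intro i _
      ring
    rw [avg_congr hz, avg_finsum]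
    apply Finset.sum_congr rfl
    intro i _
    exact (avg_const_mul (fun z => (g z - w z) * Df (prodPhi (K i)) z) (lam i)).symm
  have hmain : ε < avg Z (fun z => (g z - wstar z) * ψ z) := by
    rw [← hswap wstar]
    exact hstrict wstar hwmem
  set ψp : Z → ℝ := fun z => max (ψ z) 0 with hψp
  have hstep : avg Z (fun z => (g z - wstar z) * ψ z)
      ≤ avg Z (fun z => (ν z - 1) * ψp z) := by
    apply avg_mono
    intro z
    have hwψ : wstar z * ψ z = ψp z := by
      by_cases h : 0 ≤ ψ z
      · rw [hwdef]; simp only [if_pos h, one_mul]; simp only [hψp]; rw [max_eq_left h]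
      · rw [hwdef]; simp only [if_neg h, zero_mul]; simp only [hψp]
        rw [max_eq_right (le_of_lt (not_le.1 h))]
    have hgψ : g z * ψ z ≤ ν z * ψp z := by
      by_cases h : 0 ≤ ψ z
      · simp only [hψp]
        rw [max_eq_left h]
        exact mul_le_mul_of_nonneg_right (hg z).2 h
      · simp only [hψp]
        rw [max_eq_right (le_of_lt (not_le.1 h)), mul_zero]
        exact mul_nonpos_of_nonneg_of_nonpos (hg z).1 (le_of_lt (not_le.1 h))
    have : (g z - wstar z) * ψ z = g z * ψ z - wstar z * ψ z := by ring
    rw [this, hwψ]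
    have : (ν z - 1) * ψp z = ν z * ψp z - ψp z := by ring
    rw [this]
    linarith
  -- polynomial estimate
  have hpoly : |avg Z (fun z => (ν z - 1) * P.eval (ψ z))| ≤ C * η := by
    have hz : ∀ z, (ν z - 1) * P.eval (ψ z)
        = ∑ k ∈ Finset.range (P.natDegree + 1), P.coeff k * ((ν z - 1) * ψ z ^ k) := by
      intro z
      rw [Polynomial.eval_eq_sum_range, Finset.mul_sum]
      apply Finset.sum_congr rfl
      intro k _
      ring
    rw [avg_congr hz, avg_finsum]
    calc |∑ k ∈ Finset.range (P.natDegree + 1),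
            avg Z (fun z => P.coeff k * ((ν z - 1) * ψ z ^ k))|
        ≤ ∑ k ∈ Finset.range (P.natDegree + 1),
            |avg Z (fun z => P.coeff k * ((ν z - 1) * ψ z ^ k))| :=
          Finset.abs_sum_le_sum_abs _ _
      _ ≤ ∑ k ∈ Finset.range (P.natDegree + 1), |P.coeff k| * η := by
          apply Finset.sum_le_sum
          intro k _
          rw [avg_const_mul, abs_mul]
          apply mul_le_mul_of_nonneg_left _ (abs_nonneg _)
          have hkey := key_power lam hlam hsum K hK (fun z => ν z - 1) k
          calc |avg Z (fun z => (ν z - 1) * ψ z ^ k)| ≤ addCutNorm Z s (fun z => ν z - 1) :=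
                hkey
            _ ≤ η := hνcut
      _ = C * η := by rw [hC, Finset.sum_mul]
  -- error estimate
  have havgν : avg Z (fun z => ν z - 1) ≤ η :=
    le_trans (avg_le_addCutNorm _) hνcut
  have herr : avg Z (fun z => (ν z - 1) * (ψp z - P.eval (ψ z))) ≤ ε/6 * (2 + η) := by
    have hub : ∀ z, (ν z - 1) * (ψp z - P.eval (ψ z)) ≤ (ν z + 1) * (ε/6) := by
      intro z
      have h1 : |ψp z - P.eval (ψ z)| ≤ ε/6 := by
        have := hP (ψ z) (Set.mem_Icc.2 (abs_le.1 (hψ_bound z)))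
        rw [abs_sub_comm] at this
        exact le_of_lt this
      have h2 : |ν z - 1| ≤ ν z + 1 := by
        rw [abs_le]
        constructor <;> [linarith [hν z]; linarith [hν z]]
      calc (ν z - 1) * (ψp z - P.eval (ψ z)) ≤ |(ν z - 1) * (ψp z - P.eval (ψ z))| :=
            le_abs_self _
        _ = |ν z - 1| * |ψp z - P.eval (ψ z)| := abs_mul _ _
        _ ≤ (ν z + 1) * (ε/6) := by
            apply mul_le_mul h2 h1 (abs_nonneg _)
            linarith [hν z]
    calc avg Z (fun z => (ν z - 1) * (ψp z - P.eval (ψ z)))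
        ≤ avg Z (fun z => (ν z + 1) * (ε/6)) := avg_mono hub
      _ = avg Z (fun z => (ν z - 1) * (ε/6) + 2 * (ε/6)) := by
          apply avg_congr; intro z; ring
      _ = avg Z (fun z => ν z - 1) * (ε/6) + 2 * (ε/6) := by
          rw [avg_add, avg_mul_const]
          congr 1
          have : (fun _ : Z => 2 * (ε/6)) = fun _ : Z => (2 * (ε/6) : ℝ) := rfl
          rw [avg_const]
      _ ≤ η * (ε/6) + 2 * (ε/6) := by
          refine add_le_add ?_ le_rfl
          apply mul_le_mul_of_nonneg_right havgν
          linarith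
      _ = ε/6 * (2 + η) := by ring
  have hsplit : avg Z (fun z => (ν z - 1) * ψp z)
      = avg Z (fun z => (ν z - 1) * P.eval (ψ z))
        + avg Z (fun z => (ν z - 1) * (ψp z - P.eval (ψ z))) := by
    rw [← avg_add]
    apply avg_congr
    intro z
    ring
  have hfinal : avg Z (fun z => (ν z - 1) * ψp z) ≤ C * η + ε/6 * (2 + η) := by
    rw [hsplit]
    exact add_le_add (le_trans (le_abs_self _) hpoly) herr
  have : ε < C * η + ε/6 * (2 + η) := lt_of_lt_of_le (lt_of_lt_of_le hmain hstep) hfinal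
  have : ε < ε/6 + ε/6 * 3 := by
    apply lt_of_lt_of_le this
    apply add_le_add hηC
    apply mul_le_mul_of_nonneg_left (by linarith) (by linarith)
  linarith

end DM
set_option maxHeartbeats 1000000 in
theorem stmt9 (ε : ℝ) (hε : 0 < ε) :
    ∃ η : ℝ, 0 < η ∧ η ≤ 1 ∧
      ∀ (s : ℕ), 2 ≤ s →
        ∀ (Z : Type) [AddCommGroup Z] [Fintype Z] (ν : Z → ℝ),
          (∀ x, 0 ≤ ν x) →
          addCutNorm Z s (fun x => ν x - 1) ≤ η →
          (∀ g : Z → ℝ, (∀ x, 0 ≤ g x ∧ g x ≤ ν x) →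
            ∃ w : Z → ℝ, (∀ x, w x ∈ Set.Icc (0 : ℝ) 1) ∧
              addCutNorm Z s (fun x => g x - w x) ≤ ε) ∧
          (∀ f : Z → ℝ, (∀ x, |f x| ≤ ν x) →
            ∃ h : Z → ℝ, (∀ x, h x ∈ Set.Icc (-1 : ℝ) 1) ∧
              addCutNorm Z s (fun x => f x - h x) ≤ ε) := by
  classical
  have hcont : ContinuousOn (fun x : ℝ => max x 0) (Set.Icc (-1:ℝ) 1) :=
    (continuous_id.max continuous_const).continuousOn
  obtain ⟨P, hP⟩ := exists_polynomial_near_of_continuousOn (-1) 1 (fun x => max x 0)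
    hcont (ε/12) (by linarith)
  set C := ∑ k ∈ Finset.range (P.natDegree + 1), |P.coeff k| with hCdef
  have hC0 : 0 ≤ C := Finset.sum_nonneg fun k _ => abs_nonneg _
  have hC1 : (0:ℝ) < C + 1 := by linarith
  set η := min 1 (ε/(12*(C+1))) with hηdef
  have hηpos : 0 < η := lt_min one_pos (by positivity)
  refine ⟨η, hηpos, min_le_left _ _, ?_⟩
  intro s hs Z _ _ ν hν hνcut
  haveI : NeZero s := ⟨by omega⟩
  have hηC : C * η ≤ (ε/2)/6 := by
    have h1 : C * (ε/(12*(C+1))) = (C/(C+1)) * (ε/12) := by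
      field_simp
    have h2 : C/(C+1) ≤ 1 := by
      rw [div_le_one hC1]
      linarith
    calc C * η ≤ C * (ε/(12*(C+1))) :=
          mul_le_mul_of_nonneg_left (min_le_right _ _) hC0
      _ = (C/(C+1)) * (ε/12) := h1
      _ ≤ 1 * (ε/12) := by
          apply mul_le_mul_of_nonneg_right h2
          linarith
      _ = (ε/2)/6 := by ring
  have hP' : ∀ x ∈ Set.Icc (-1:ℝ) 1, |P.eval x - max x 0| < (ε/2)/6 := by
    intro x hx
    have h := hP x hx
    have h12 : (ε/2)/6 = ε/12 := by ring
    rw [h12]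
    exact h
  have hcore : ∀ (g : Z → ℝ), (∀ x, 0 ≤ g x ∧ g x ≤ ν x) →
      ∃ w : Z → ℝ, (∀ x, w x ∈ Set.Icc (0:ℝ) 1) ∧
        addCutNorm Z s (fun z => g z - w z) ≤ ε/2 := fun g hg =>
    DM.core (ε/2) C (by linarith) P hP' hCdef η hηpos (min_le_left _ _) hηC ν hν hνcut g hg
  constructor
  · intro g hg
    obtain ⟨w, hw, hb⟩ := hcore g hg
    exact ⟨w, hw, hb.trans (by linarith)⟩
  · intro f hf
    have hplus : ∀ x, 0 ≤ max (f x) 0 ∧ max (f x) 0 ≤ ν x := fun x =>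
      ⟨le_max_right _ _, max_le ((le_abs_self _).trans (hf x)) (hν x)⟩
    have hminus : ∀ x, 0 ≤ max (-f x) 0 ∧ max (-f x) 0 ≤ ν x := fun x =>
      ⟨le_max_right _ _, max_le ((neg_le_abs _).trans (hf x)) (hν x)⟩
    obtain ⟨w₁, hw₁, hb₁⟩ := hcore (fun z => max (f z) 0) hplus
    obtain ⟨w₂, hw₂, hb₂⟩ := hcore (fun z => max (-f z) 0) hminus
    refine ⟨fun z => w₁ z - w₂ z, ?_, ?_⟩
    · intro x
      have h1 := hw₁ x
      have h2 := hw₂ x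
      simp only [Set.mem_Icc] at h1 h2 ⊢
      constructor <;> linarith [h1.1, h1.2, h2.1, h2.2]
    · have hdecomp : (fun z => f z - (w₁ z - w₂ z))
          = fun z => (max (f z) 0 - w₁ z) + (-(max (-f z) 0 - w₂ z)) := by
        funext z
        have hfz : f z = max (f z) 0 - max (-f z) 0 := by
          rcases le_total (f z) 0 with h | h
          · rw [max_eq_right h, max_eq_left (by linarith)]
            ring
          · rw [max_eq_left h, max_eq_right (by linarith)]
            ring
        linarith [hfz]
      rw [hdecomp]
      have hstep := DM.addCutNorm_add_le (Z := Z) (s := s)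
        (fun z => max (f z) 0 - w₁ z) (fun z => -(max (-f z) 0 - w₂ z))
      apply le_trans hstep
      have hneg := DM.addCutNorm_neg (Z := Z) (s := s) (fun z => max (-f z) 0 - w₂ z)
      have h2 : addCutNorm Z s (fun z => -(max (-f z) 0 - w₂ z)) ≤ ε/2 :=
        le_trans hneg hb₂
      linarith [hb₁]
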